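/- Let δ > 0, 1 < q < ∞, 1/2 ≤ μ < 1, and let α, γ be real numbers with α + γ > 0 and 1 − (α+γ)q − μ > 0. Let u(t) = t^{−(α+γ)} for t ∈ (0,δ) and u(t) = 0 otherwise. Then u has finite local one-sided weighted Morrey norm with weight |x|^{−1/2}: ‖u‖_{L^{q,μ}_+((0,δ),|x|^{−1/2})} = sup_{0≤x0≤δ, 0<h≤δ} ( (h^{μ−1} ∫_{x0−h}^{x0} |x|^{−1/2} dx)^{−1} ∫_{(x0,x0+h)∩(0,δ)} |u(t)|^q dt )^{1/q} < ∞. -/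

import Mathlib

open MeasureTheory
open scoped ENNReal

/-- `Φ⁺_{v,μ,1}(x0,h) = h^{μ−1} ∫_{x0−h}^{x0} v`. -/
noncomputable def Phi (v : ℝ → ℝ) (lam θ x0 h : ℝ) : ℝ :=
  h ^ (lam - 1) * ∫ y in (x0 - h)..x0, (v y) ^ θ

/-- The local one-sided weighted Morrey norm `‖u‖_{L^{q,μ}_+((0,δ),v)}`. -/
noncomputable def morreyLocal (T : ℝ) (v : ℝ → ℝ) (p lam θ : ℝ) (u : ℝ → ℝ) : ℝ≥0∞ :=
  ⨆ x0 ∈ Set.Icc (0:ℝ) T, ⨆ h ∈ Set.Ioc (0:ℝ) T,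
    ((∫⁻ y in Set.Ioo x0 (x0 + h) ∩ Set.Ioo 0 T, ENNReal.ofReal (|u y| ^ p)) /
      ENNReal.ofReal (Phi v lam θ x0 h)) ^ (1 / p)

lemma abs_rpow_neg_half_eq (y : ℝ) :
    |y| ^ (-(1 / 2) : ℝ) = y ^ (-(1 / 2) : ℝ) + (-y) ^ (-(1 / 2) : ℝ) := by
  have hcos : Real.cos ((-(1 / 2) : ℝ) * Real.pi) = 0 := by
    rw [show (-(1 / 2) : ℝ) * Real.pi = -(Real.pi / 2) by ring, Real.cos_neg,
      Real.cos_pi_div_two]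
  rcases lt_trichotomy y 0 with hy | rfl | hy
  · rw [abs_of_neg hy, Real.rpow_def_of_neg hy, hcos, mul_zero, zero_add]
  · simp [Real.zero_rpow (by norm_num : (-(1 / 2) : ℝ) ≠ 0)]
  · rw [abs_of_pos hy, Real.rpow_def_of_neg (by linarith : -y < 0), hcos, mul_zero, add_zero]

lemma real_rpow_add_le {a b p : ℝ} (ha : 0 ≤ a) (hb : 0 ≤ b) (hp : 0 ≤ p) (hp1 : p ≤ 1) :
    (a + b) ^ p ≤ a ^ p + b ^ p := by
  have h := NNReal.rpow_add_le_add_rpow a.toNNReal b.toNNReal hp hp1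
  have h2 := NNReal.coe_le_coe.2 h
  simpa [NNReal.coe_rpow, Real.coe_toNNReal _ ha, Real.coe_toNNReal _ hb,
    Real.toNNReal_add ha hb] using h2

/-- The function `u(t) = t^{−(α+γ)}` on `(0,δ)` has finite
`L^{q,μ}_+((0,δ),|x|^{−1/2})` norm when `1 − (α+γ)q − μ > 0` and `1/2 ≤ μ < 1`. -/
theorem power_function_in_morrey (δ q μ α γ : ℝ) (hδ : 0 < δ)
    (hq : 1 < q) (hμ0 : 1 / 2 ≤ μ) (hμ1 : μ < 1)
    (hαγ : 0 < α + γ) (hexp : 0 < 1 - (α + γ) * q - μ) :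
    morreyLocal δ (fun x => |x| ^ (-(1 / 2) : ℝ)) q μ 1
      (Set.indicator (Set.Ioo 0 δ) (fun t => t ^ (-(α + γ)))) < ⊤ := by
  set β : ℝ := (α + γ) * q with hβdef
  have hβ0 : 0 < β := mul_pos hαγ (by linarith)
  have hβμ : β + μ < 1 := by linarith
  have hβ1 : β < 1 / 2 := by linarith
  have h1β : 0 < 1 - β := by linarith
  have he : 0 < 1 - β - μ := by linarith
  set C : ℝ := δ ^ (1 - β - μ) * δ ^ ((1 : ℝ) / 2) / (1 - β) with hCdef
  have hC : 0 < C := by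
    apply div_pos (mul_pos (Real.rpow_pos_of_pos hδ _) (Real.rpow_pos_of_pos hδ _)) h1β
  have htop : (ENNReal.ofReal C) ^ (1 / q) < ⊤ :=
    ENNReal.rpow_lt_top_of_nonneg (by positivity) ENNReal.ofReal_ne_top
  refine lt_of_le_of_lt ?_ htop
  rw [morreyLocal]
  refine iSup₂_le fun x0 hx0 => iSup₂_le fun h hh => ?_
  obtain ⟨hx00, hx0δ⟩ := hx0
  obtain ⟨hh0, hhδ⟩ := hh
  refine ENNReal.rpow_le_rpow ?_ (by positivity)
  refine ENNReal.div_le_of_le_mul ?_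
  -- lower bound on Phi
  have hgabs : IntervalIntegrable (fun y : ℝ => |y| ^ (-(1 / 2) : ℝ)) volume (x0 - h) x0 := by
    have h1 : IntervalIntegrable (fun y : ℝ => y ^ (-(1 / 2) : ℝ)) volume (x0 - h) x0 :=
      intervalIntegral.intervalIntegrable_rpow' (by norm_num)
    have h2 : IntervalIntegrable (fun y : ℝ => (-y) ^ (-(1 / 2) : ℝ)) volume (x0 - h) x0 := by
      have := (IntervalIntegrable.iff_comp_neg
        (f := fun y : ℝ => y ^ (-(1 / 2) : ℝ)) (a := -(x0 - h)) (b := -x0)).mp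
        (intervalIntegral.intervalIntegrable_rpow' (by norm_num))
      simpa using this
    have heq : (fun y : ℝ => |y| ^ (-(1 / 2) : ℝ))
        = fun y => y ^ (-(1 / 2) : ℝ) + (-y) ^ (-(1 / 2) : ℝ) := funext abs_rpow_neg_half_eq
    rw [heq]
    exact h1.add h2
  have hI : h * δ ^ (-(1 / 2) : ℝ) ≤ ∫ y in (x0 - h)..x0, |y| ^ (-(1 / 2) : ℝ) := by
    have hconst : ∫ y in (x0 - h)..x0, δ ^ (-(1 / 2) : ℝ) = h * δ ^ (-(1 / 2) : ℝ) := by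
      rw [intervalIntegral.integral_const, smul_eq_mul, show x0 - (x0 - h) = h by ring]
    rw [← hconst]
    refine intervalIntegral.integral_mono_ae_restrict (by linarith)
      intervalIntegrable_const hgabs ?_
    have h0 : ∀ᵐ y : ℝ, y ≠ 0 := by
      refine (ae_iff).mpr ?_
      simp only [not_not]
      simp [Real.volume_singleton]
    filter_upwards [ae_restrict_mem measurableSet_Icc,
      h0.filter_mono (ae_mono Measure.restrict_le_self)] with y hy hy0
    have hyabs : |y| ≤ δ := abs_le.mpr ⟨by linarith [hy.1], by linarith [hy.2]⟩
    exact Real.rpow_le_rpow_of_nonpos (abs_pos.mpr hy0) hyabs (by norm_num)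
  have hPhi : h ^ μ * δ ^ (-(1 / 2) : ℝ) ≤
      Phi (fun x => |x| ^ (-(1 / 2) : ℝ)) μ 1 x0 h := by
    have hpow : h ^ (μ - 1) * h = h ^ μ := by
      rw [← Real.rpow_add_one hh0.ne' (μ - 1)]
      congr 1
      ring
    calc h ^ μ * δ ^ (-(1 / 2) : ℝ) = h ^ (μ - 1) * (h * δ ^ (-(1 / 2) : ℝ)) := by
          rw [← hpow]; ring
      _ ≤ h ^ (μ - 1) * ∫ y in (x0 - h)..x0, |y| ^ (-(1 / 2) : ℝ) :=
          mul_le_mul_of_nonneg_left hI (Real.rpow_pos_of_pos hh0 _).le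
      _ = Phi (fun x => |x| ^ (-(1 / 2) : ℝ)) μ 1 x0 h := by
          simp only [Phi, Real.rpow_one]
  -- numerator
  have hScongr : ∫⁻ y in Set.Ioo x0 (x0 + h) ∩ Set.Ioo 0 δ,
      ENNReal.ofReal (|Set.indicator (Set.Ioo 0 δ) (fun t => t ^ (-(α + γ))) y| ^ q)
      = ∫⁻ y in Set.Ioo x0 (x0 + h) ∩ Set.Ioo 0 δ, ENNReal.ofReal (y ^ (-β)) := by
    refine setLIntegral_congr_fun (measurableSet_Ioo.inter measurableSet_Ioo) ?_
    intro y hy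
    beta_reduce
    rw [Set.indicator_of_mem hy.2]
    rw [abs_of_nonneg (Real.rpow_nonneg hy.2.1.le _), ← Real.rpow_mul hy.2.1.le]
    congr 2
    rw [hβdef]; ring
  have hmono : ∫⁻ y in Set.Ioo x0 (x0 + h) ∩ Set.Ioo 0 δ, ENNReal.ofReal (y ^ (-β))
      ≤ ∫⁻ y in Set.Ioo x0 (x0 + h), ENNReal.ofReal (y ^ (-β)) :=
    lintegral_mono_set Set.inter_subset_left
  have hint : IntegrableOn (fun y : ℝ => y ^ (-β)) (Set.Ioo x0 (x0 + h)) volume := by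
    have := intervalIntegral.intervalIntegrable_rpow' (a := x0) (b := x0 + h) (show (-1 : ℝ) < -β by linarith)
    rwa [intervalIntegrable_iff_integrableOn_Ioo_of_le (by linarith)] at this
  have hlin : ∫⁻ y in Set.Ioo x0 (x0 + h), ENNReal.ofReal (y ^ (-β))
      = ENNReal.ofReal (∫ y in Set.Ioo x0 (x0 + h), y ^ (-β)) := by
    rw [ofReal_integral_eq_lintegral_ofReal hint ?_]
    filter_upwards [ae_restrict_mem measurableSet_Ioo] with y hy
    exact Real.rpow_nonneg (hx00.trans hy.1.le) _
  have hval : ∫ y in Set.Ioo x0 (x0 + h), y ^ (-β)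
      = ((x0 + h) ^ (1 - β) - x0 ^ (1 - β)) / (1 - β) := by
    rw [← integral_Ioc_eq_integral_Ioo, ← intervalIntegral.integral_of_le (by linarith)]
    rw [integral_rpow (Or.inl (by linarith : (-1 : ℝ) < -β))]
    rw [show -β + 1 = 1 - β by ring]
  -- real chain
  have hreal : ((x0 + h) ^ (1 - β) - x0 ^ (1 - β)) / (1 - β) ≤
      C * Phi (fun x => |x| ^ (-(1 / 2) : ℝ)) μ 1 x0 h := by
    have hA : (x0 + h) ^ (1 - β) - x0 ^ (1 - β) ≤ h ^ (1 - β) := by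
      have := real_rpow_add_le hx00 hh0.le (by linarith : (0:ℝ) ≤ 1 - β) (by linarith)
      linarith
    have hhsplit : h ^ (1 - β) = h ^ (1 - β - μ) * h ^ μ := by
      rw [← Real.rpow_add hh0]; congr 1; ring
    have hδhalf : δ ^ ((1 : ℝ) / 2) * δ ^ (-(1 / 2) : ℝ) = 1 := by
      rw [← Real.rpow_add hδ]; norm_num
    have hB : h ^ (1 - β) / (1 - β) ≤ C * (h ^ μ * δ ^ (-(1 / 2) : ℝ)) := by
      have hstep : h ^ (1 - β - μ) ≤ δ ^ (1 - β - μ) :=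
        Real.rpow_le_rpow hh0.le hhδ he.le
      have heq : C * (h ^ μ * δ ^ (-(1 / 2) : ℝ)) = δ ^ (1 - β - μ) * h ^ μ / (1 - β) := by
        calc C * (h ^ μ * δ ^ (-(1 / 2) : ℝ))
            = δ ^ (1 - β - μ) * h ^ μ / (1 - β) * (δ ^ ((1 : ℝ) / 2) * δ ^ (-(1 / 2) : ℝ)) := by
              rw [hCdef]; ring
          _ = δ ^ (1 - β - μ) * h ^ μ / (1 - β) := by rw [hδhalf, mul_one]
      rw [heq, hhsplit]
      gcongr
    calc ((x0 + h) ^ (1 - β) - x0 ^ (1 - β)) / (1 - β) ≤ h ^ (1 - β) / (1 - β) := by gcongr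
      _ ≤ C * (h ^ μ * δ ^ (-(1 / 2) : ℝ)) := hB
      _ ≤ C * Phi (fun x => |x| ^ (-(1 / 2) : ℝ)) μ 1 x0 h :=
          mul_le_mul_of_nonneg_left hPhi hC.le
  calc ∫⁻ y in Set.Ioo x0 (x0 + h) ∩ Set.Ioo 0 δ,
        ENNReal.ofReal (|Set.indicator (Set.Ioo 0 δ) (fun t => t ^ (-(α + γ))) y| ^ q)
      = ∫⁻ y in Set.Ioo x0 (x0 + h) ∩ Set.Ioo 0 δ, ENNReal.ofReal (y ^ (-β)) := hScongr
    _ ≤ ∫⁻ y in Set.Ioo x0 (x0 + h), ENNReal.ofReal (y ^ (-β)) := hmono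
    _ = ENNReal.ofReal (((x0 + h) ^ (1 - β) - x0 ^ (1 - β)) / (1 - β)) := by
        rw [hlin, hval]
    _ ≤ ENNReal.ofReal (C * Phi (fun x => |x| ^ (-(1 / 2) : ℝ)) μ 1 x0 h) :=
        ENNReal.ofReal_le_ofReal hreal
    _ = ENNReal.ofReal C * ENNReal.ofReal (Phi (fun x => |x| ^ (-(1 / 2) : ℝ)) μ 1 x0 h) :=
        ENNReal.ofReal_mul hC.le
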